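/- Let R₁, …, R_k be binary relations on a set I, each of height at most ω. Then the converse of the one-step extension relation ≻ on H(R₁ ∪ … ∪ R_k) is well-founded, and the rank of the empty sequence with respect to ≻ (where rank(s) = sup{ rank(s') + 1 : s' ≻ s }) is at most ω^k; i.e. the (R₁ ∪ … ∪ R_k)-homogeneous sequences form a well-founded set of ordinal height at most ω^k. -/

import Mathlib

/-- `HSet r` is `H(r)`, the set of `r`-decreasing transitive finite sequences on `I`:
`⟨x₁, …, x_n⟩ ∈ H(r)` iff `i < j` implies `x_j r x_i`. -/
def HSet {I : Type*} (r : I → I → Prop) : Set (List I) :=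
  {l | l.Pairwise fun a b => r b a}

/-- One-step extension on `H(r)`: `s' ≻ s` iff `s' = s ++ [y]` for some `y`. -/
def HExt {I : Type*} (r : I → I → Prop) (s' s : {l : List I // l ∈ HSet r}) : Prop :=
  ∃ y : I, s'.1 = s.1 ++ [y]

/-- The rank of an element under a well-founded relation:
`rank x = sup { rank y + 1 : r y x }`. -/
noncomputable def WFRank {α : Type*} {r : α → α → Prop} (hwf : WellFounded r) (a : α) :
    Ordinal := (hwf.apply a).rank

universe u

namespace Ordinal

noncomputable def nadd (a b : Ordinal.{u}) : Ordinal.{u} :=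
  max (⨆ a' : Set.Iio a, Order.succ (nadd a'.1 b)) (⨆ b' : Set.Iio b, Order.succ (nadd a b'.1))
termination_by (a, b)
decreasing_by
  · exact Prod.Lex.left _ _ a'.2
  · exact Prod.Lex.right _ b'.2

infixl:65 " ♯ " => Ordinal.nadd

theorem nadd_le_iff {a b c : Ordinal.{u}} :
    a ♯ b ≤ c ↔ (∀ a' < a, a' ♯ b < c) ∧ ∀ b' < b, a ♯ b' < c := by
  rw [nadd, max_le_iff, Ordinal.iSup_le_iff, Ordinal.iSup_le_iff]
  simp only [Order.succ_le_iff, Subtype.forall, Set.mem_Iio]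

theorem nadd_lt_nadd_left {b c : Ordinal.{u}} (h : b < c) (a : Ordinal.{u}) : a ♯ b < a ♯ c :=
  (nadd_le_iff.1 (le_refl (a ♯ c))).2 b h

theorem nadd_lt_nadd_right {a b : Ordinal.{u}} (h : a < b) (c : Ordinal.{u}) : a ♯ c < b ♯ c :=
  (nadd_le_iff.1 (le_refl (b ♯ c))).1 a h

theorem nadd_le_nadd_left {b c : Ordinal.{u}} (h : b ≤ c) (a : Ordinal.{u}) : a ♯ b ≤ a ♯ c := by
  rcases h.eq_or_lt with rfl | h
  · exact le_rfl
  · exact (nadd_lt_nadd_left h a).le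

theorem nadd_le_nadd_right {a b : Ordinal.{u}} (h : a ≤ b) (c : Ordinal.{u}) : a ♯ c ≤ b ♯ c := by
  rcases h.eq_or_lt with rfl | h
  · exact le_rfl
  · exact (nadd_lt_nadd_right h c).le

@[simp] theorem nadd_zero (a : Ordinal.{u}) : a ♯ 0 = a := by
  induction a using Ordinal.induction with
  | _ a IH =>
    apply le_antisymm
    · rw [nadd_le_iff]
      refine ⟨fun a' ha' => ?_, fun b' hb' => by simp at hb'⟩
      rw [IH a' ha']; exact ha'
    · apply le_of_forall_lt
      intro c hc
      rw [← IH c hc]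
      exact nadd_lt_nadd_right hc 0

theorem nadd_comm (a b : Ordinal.{u}) : a ♯ b = b ♯ a := by
  induction a using Ordinal.induction generalizing b with
  | _ a IHa =>
    induction b using Ordinal.induction with
    | _ b IHb =>
      apply le_antisymm
      · rw [nadd_le_iff]
        refine ⟨fun a' ha' => ?_, fun b' hb' => ?_⟩
        · rw [IHa a' ha']; exact nadd_lt_nadd_left ha' b
        · rw [IHb b' hb']; exact nadd_lt_nadd_right hb' a
      · rw [nadd_le_iff]
        refine ⟨fun b' hb' => ?_, fun a' ha' => ?_⟩
        · rw [← IHb b' hb']; exact nadd_lt_nadd_left hb' a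
        · rw [← IHa a' ha']; exact nadd_lt_nadd_right ha' b

@[simp] theorem zero_nadd (a : Ordinal.{u}) : 0 ♯ a = a := by
  rw [nadd_comm, nadd_zero]

theorem lt_nadd_iff {a b c : Ordinal.{u}} :
    a < b ♯ c ↔ (∃ b' < b, a ≤ b' ♯ c) ∨ ∃ c' < c, a ≤ b ♯ c' := by
  rw [← not_iff_not, not_lt, nadd_le_iff]
  push_neg
  rfl

theorem nadd_assoc_le (a b c : Ordinal.{u}) : a ♯ b ♯ c ≤ a ♯ (b ♯ c) := by
  induction a using Ordinal.induction generalizing b c with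
  | _ a IHa =>
    induction b using Ordinal.induction generalizing c with
    | _ b IHb =>
      induction c using Ordinal.induction with
      | _ c IHc =>
        rw [nadd_le_iff]
        refine ⟨fun d hd => ?_, fun c' hc' => ?_⟩
        · rcases lt_nadd_iff.1 hd with ⟨a', ha', hd'⟩ | ⟨b', hb', hd'⟩
          · exact ((nadd_le_nadd_right hd' c).trans (IHa a' ha' b c)).trans_lt
              (nadd_lt_nadd_right ha' _)
          · exact ((nadd_le_nadd_right hd' c).trans (IHb b' hb' c)).trans_lt
              (nadd_lt_nadd_left (nadd_lt_nadd_right hb' c) a)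
        · exact (IHc c' hc').trans_lt (nadd_lt_nadd_left (nadd_lt_nadd_left hc' b) a)

theorem nadd_assoc (a b c : Ordinal.{u}) : a ♯ b ♯ c = a ♯ (b ♯ c) := by
  apply le_antisymm (nadd_assoc_le a b c)
  calc a ♯ (b ♯ c) = c ♯ b ♯ a := by rw [nadd_comm a, nadd_comm b]
    _ ≤ c ♯ (b ♯ a) := nadd_assoc_le c b a
    _ = a ♯ b ♯ c := by rw [nadd_comm c, nadd_comm b]

theorem le_nadd_right (a b : Ordinal.{u}) : a ≤ a ♯ b := by
  simpa using nadd_le_nadd_left (by simp : (0 : Ordinal.{u}) ≤ b) a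

theorem add_le_nadd (a b : Ordinal.{u}) : a + b ≤ a ♯ b := by
  induction b using Ordinal.induction with
  | _ b IH =>
    apply le_of_forall_lt
    intro x hx
    rcases lt_or_ge x a with h | h
    · exact h.trans_le (le_nadd_right a b)
    · have hx' : a + (x - a) < a + b := by rwa [Ordinal.add_sub_cancel_of_le h]
      have hlt : x - a < b := (add_lt_add_iff_left a).1 hx'
      rw [← Ordinal.add_sub_cancel_of_le h]
      exact (IH _ hlt).trans_lt (nadd_lt_nadd_left hlt a)

end Ordinal

def NatOrdinal : Type (u + 1) := Ordinal.{u}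

namespace NatOrdinal

noncomputable instance : LinearOrder NatOrdinal.{u} := inferInstanceAs (LinearOrder Ordinal.{u})

instance : WellFoundedLT NatOrdinal.{u} := inferInstanceAs (WellFoundedLT Ordinal.{u})

noncomputable instance : Add NatOrdinal.{u} := ⟨Ordinal.nadd⟩

instance : Zero NatOrdinal.{u} := ⟨(0 : Ordinal.{u})⟩

noncomputable instance : AddCommMonoid NatOrdinal.{u} where
  add_assoc := Ordinal.nadd_assoc
  zero_add := Ordinal.zero_nadd
  add_zero := Ordinal.nadd_zero
  add_comm := Ordinal.nadd_comm
  nsmul := nsmulRec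

instance : IsOrderedCancelAddMonoid NatOrdinal.{u} where
  add_le_add_left a b h c := Ordinal.nadd_le_nadd_right h c
  le_of_add_le_add_left a b c h := by
    by_contra h'
    exact absurd h (not_le.2 (Ordinal.nadd_lt_nadd_left (not_le.1 h') a))

instance : AddLeftStrictMono NatOrdinal.{u} :=
  ⟨fun a _ _ h => Ordinal.nadd_lt_nadd_left h a⟩

noncomputable def toOrdinal : NatOrdinal.{u} ≃o Ordinal.{u} := OrderIso.refl _

@[simp] theorem toOrdinal_zero : toOrdinal (0 : NatOrdinal.{u}) = 0 := rfl

end NatOrdinal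

noncomputable def Ordinal.toNatOrdinal : Ordinal.{u} ≃o NatOrdinal.{u} := OrderIso.refl _

namespace Stmt3Aux
open Ordinal

theorem decomp {d : Ordinal.{u}} {s : ℕ} {x : Ordinal.{u}}
    (hx : x < omega0 ^ d * s) :
    ∃ (j : ℕ) (r : Ordinal.{u}), j < s ∧ r < omega0 ^ d ∧ x = omega0 ^ d * j + r := by
  have h0 : omega0.{u} ^ d ≠ 0 := (opow_pos d omega0_pos).ne'
  have hdiv : x / omega0 ^ d < (s : Ordinal) := (Ordinal.div_lt h0).2 hx
  obtain ⟨j, hj⟩ := lt_omega0.1 (hdiv.trans (nat_lt_omega0 s))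
  refine ⟨j, x % (omega0 ^ d), ?_, mod_lt x h0, ?_⟩
  · rw [hj] at hdiv; exact_mod_cast hdiv
  · rw [← hj, div_add_mod]

theorem Qlem (d : ℕ)
    (cl : ∀ a b : Ordinal.{u}, a < omega0 ^ (d : Ordinal) → b < omega0 ^ (d : Ordinal) →
      a ♯ b < omega0 ^ (d : Ordinal)) :
    ∀ (s : ℕ) (w : Ordinal.{u}), w < omega0 ^ (d : Ordinal) →
      omega0 ^ (d : Ordinal) * s ♯ w = omega0 ^ (d : Ordinal) * s + w := by
  intro s
  induction s using Nat.strong_induction_on with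
  | _ s IHs =>
    intro w
    induction w using Ordinal.induction with
    | _ w IHw =>
      intro hw
      apply le_antisymm
      · rw [nadd_le_iff]
        constructor
        · rintro a' ha'
          obtain ⟨j, r, hj, hr, rfl⟩ := decomp ha'
          have hrw : r ♯ w < omega0 ^ (d : Ordinal) := cl r w hr hw
          calc (omega0 ^ (d:Ordinal) * j + r) ♯ w
              ≤ (omega0 ^ (d:Ordinal) * j ♯ r) ♯ w :=
                nadd_le_nadd_right (add_le_nadd _ _) w
            _ = omega0 ^ (d:Ordinal) * j ♯ (r ♯ w) := nadd_assoc _ _ _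
            _ = omega0 ^ (d:Ordinal) * j + (r ♯ w) := IHs j hj (r ♯ w) hrw
            _ < omega0 ^ (d:Ordinal) * j + omega0 ^ (d:Ordinal) := add_lt_add_right hrw _
            _ = omega0 ^ (d:Ordinal) * ((j : Ordinal) + 1) := by rw [mul_add_one]
            _ ≤ omega0 ^ (d:Ordinal) * (s : Ordinal) := by
                apply mul_le_mul_right
                exact_mod_cast Nat.succ_le_of_lt hj
            _ ≤ omega0 ^ (d:Ordinal) * s + w := le_add_right le_rfl
        · intro w' hw'
          rw [IHw w' hw' (hw'.trans hw)]
          exact add_lt_add_right hw' _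
      · exact add_le_nadd _ _

theorem Llem (d : ℕ)
    (cl : ∀ a b : Ordinal.{u}, a < omega0 ^ (d : Ordinal) → b < omega0 ^ (d : Ordinal) →
      a ♯ b < omega0 ^ (d : Ordinal)) :
    ∀ p q : ℕ, omega0.{u} ^ (d : Ordinal) * p ♯ omega0 ^ (d : Ordinal) * q ≤
      omega0 ^ (d : Ordinal) * ((p + q : ℕ) : Ordinal) := by
  suffices H : ∀ s p q : ℕ, p + q ≤ s →
      omega0.{u} ^ (d : Ordinal) * p ♯ omega0 ^ (d : Ordinal) * q ≤
        omega0 ^ (d : Ordinal) * ((p + q : ℕ) : Ordinal) from fun p q => H (p + q) p q le_rfl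
  intro s
  induction s with
  | zero =>
    intro p q hpq
    obtain ⟨rfl, rfl⟩ : p = 0 ∧ q = 0 := by omega
    simp
  | succ s IH =>
    intro p q hpq
    have key : ∀ (p' q' : ℕ) (a' : Ordinal.{u}), p' + q' ≤ s + 1 →
        a' < omega0 ^ (d:Ordinal) * p' →
        a' ♯ omega0 ^ (d:Ordinal) * q' < omega0 ^ (d:Ordinal) * ((p' + q' : ℕ) : Ordinal) := by
      intro p' q' a' hs ha'
      obtain ⟨j, r, hj, hr, rfl⟩ := decomp ha'
      calc (omega0 ^ (d:Ordinal) * j + r) ♯ omega0 ^ (d:Ordinal) * q'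
          ≤ (omega0 ^ (d:Ordinal) * j ♯ r) ♯ omega0 ^ (d:Ordinal) * q' :=
            nadd_le_nadd_right (add_le_nadd _ _) _
        _ = (omega0 ^ (d:Ordinal) * j ♯ omega0 ^ (d:Ordinal) * q') ♯ r := by
            rw [nadd_assoc, nadd_assoc, nadd_comm r]
        _ ≤ omega0 ^ (d:Ordinal) * ((j + q' : ℕ) : Ordinal) ♯ r :=
            nadd_le_nadd_right (IH j q' (by omega)) r
        _ = omega0 ^ (d:Ordinal) * ((j + q' : ℕ) : Ordinal) + r := Qlem d cl (j + q') r hr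
        _ < omega0 ^ (d:Ordinal) * ((j + q' : ℕ) : Ordinal) + omega0 ^ (d:Ordinal) :=
            add_lt_add_right hr _
        _ = omega0 ^ (d:Ordinal) * (((j + q' : ℕ) : Ordinal) + 1) := by rw [mul_add_one]
        _ ≤ omega0 ^ (d:Ordinal) * ((p' + q' : ℕ) : Ordinal) := by
            apply mul_le_mul_right
            have : (j + q' + 1 : ℕ) ≤ p' + q' := by omega
            exact_mod_cast this
    rw [nadd_le_iff]
    constructor
    · intro a' ha'
      exact key p q a' hpq ha'
    · intro b' hb'
      have h := key q p b' (by omega) hb'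
      rw [nadd_comm]
      rwa [Nat.add_comm q p] at h

theorem nadd_lt_opow_mul (d : ℕ)
    (cl : ∀ a b : Ordinal.{u}, a < omega0 ^ (d : Ordinal) → b < omega0 ^ (d : Ordinal) →
      a ♯ b < omega0 ^ (d : Ordinal))
    {p q : ℕ} {a b : Ordinal.{u}}
    (ha : a < omega0 ^ (d:Ordinal) * p) (hb : b < omega0 ^ (d:Ordinal) * q) :
    a ♯ b < omega0 ^ (d:Ordinal) * ((p + q : ℕ) : Ordinal) :=
  ((nadd_lt_nadd_right ha b).trans_le
    ((nadd_le_nadd_left hb.le _).trans (Llem d cl p q)))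

theorem cl_opow : ∀ (d : ℕ) (a b : Ordinal.{u}), a < omega0 ^ (d : Ordinal) →
    b < omega0 ^ (d : Ordinal) → a ♯ b < omega0 ^ (d : Ordinal) := by
  intro d
  induction d with
  | zero =>
    intro a b ha hb
    simp only [Nat.cast_zero, opow_zero, lt_one_iff_zero] at *
    subst ha; simpa using hb
  | succ d IH =>
    intro a b ha hb
    rw [Nat.cast_succ, add_one_eq_succ, opow_succ] at ha hb ⊢
    obtain ⟨p', hp', hap⟩ := (lt_mul_iff_of_isSuccLimit isSuccLimit_omega0).1 ha
    obtain ⟨p, rfl⟩ := lt_omega0.1 hp'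
    obtain ⟨q', hq', hbq⟩ := (lt_mul_iff_of_isSuccLimit isSuccLimit_omega0).1 hb
    obtain ⟨q, rfl⟩ := lt_omega0.1 hq'
    exact (nadd_lt_opow_mul d IH hap hbq).trans
      (mul_lt_mul_of_pos_left (nat_lt_omega0 (p + q)) (opow_pos _ omega0_pos))

theorem nadd_lt_opow_mul' (d : ℕ) {p q : ℕ} {a b : Ordinal.{u}}
    (ha : a < omega0 ^ (d:Ordinal) * p) (hb : b < omega0 ^ (d:Ordinal) * q) :
    a ♯ b < omega0 ^ (d:Ordinal) * ((p + q : ℕ) : Ordinal) :=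
  nadd_lt_opow_mul d (cl_opow d) ha hb


theorem toOrd_le {x : NatOrdinal.{u}} {a : Ordinal.{u}}
    (h : x ≤ Ordinal.toNatOrdinal a) : NatOrdinal.toOrdinal x ≤ a :=
  NatOrdinal.toOrdinal.le_iff_le.2 h

theorem lt_toNat {x : NatOrdinal.{u}} {a : Ordinal.{u}}
    (h : NatOrdinal.toOrdinal x < a) : x < Ordinal.toNatOrdinal a :=
  Ordinal.toNatOrdinal.lt_iff_lt.2 h

theorem toOrd_add (x y : NatOrdinal.{u}) :
    NatOrdinal.toOrdinal (x + y) = NatOrdinal.toOrdinal x ♯ NatOrdinal.toOrdinal y := rfl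

theorem opow_succ_nat (d : ℕ) :
    omega0.{u} ^ ((d + 1 : ℕ) : Ordinal) = omega0.{u} ^ (d : Ordinal) * omega0 := by
  rw [Nat.cast_succ, add_one_eq_succ, opow_succ]

theorem sum_lt_opow_succ {ι : Type*} (J : Finset ι) (f : ι → NatOrdinal.{u}) (d : ℕ)
    (hf : ∀ j ∈ J, f j ≤ Ordinal.toNatOrdinal (omega0.{u} ^ (d : Ordinal))) :
    ∑ j ∈ J, f j < Ordinal.toNatOrdinal (omega0.{u} ^ ((d + 1 : ℕ) : Ordinal)) := by
  classical
  have key : ∀ J' : Finset ι,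
      (∀ j ∈ J', f j ≤ Ordinal.toNatOrdinal (omega0.{u} ^ (d : Ordinal))) →
      ∃ m : ℕ, NatOrdinal.toOrdinal (∑ j ∈ J', f j) < omega0.{u} ^ (d : Ordinal) * m := by
    intro J'
    induction J' using Finset.cons_induction with
    | empty =>
      intro _
      refine ⟨1, ?_⟩
      simp only [Finset.sum_empty, Nat.cast_one, mul_one]
      exact opow_pos _ omega0_pos
    | cons a s ha IH =>
      intro hf'
      obtain ⟨m, hm⟩ := IH fun j hj => hf' j (Finset.mem_cons.2 (Or.inr hj))
      refine ⟨2 + m, ?_⟩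
      rw [Finset.sum_cons, toOrd_add]
      have h1 : NatOrdinal.toOrdinal (f a) < omega0.{u} ^ (d : Ordinal) * ((2:ℕ) : Ordinal) := by
        refine (toOrd_le (hf' a (Finset.mem_cons_self a s))).trans_lt ?_
        conv_lhs => rw [← mul_one (omega0.{u} ^ (d : Ordinal))]
        apply mul_lt_mul_of_pos_left _ (opow_pos _ omega0_pos)
        exact_mod_cast Nat.one_lt_two
      exact nadd_lt_opow_mul' d h1 hm
  obtain ⟨m, hm⟩ := key J hf
  apply lt_toNat
  refine hm.trans ?_
  rw [opow_succ_nat]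
  exact mul_lt_mul_of_pos_left (nat_lt_omega0 m) (opow_pos _ omega0_pos)

/-! ### The measure -/

variable {k : ℕ}

/-- badness of a list of rank-vectors relative to a set of coordinates -/
def Bad (S : Finset (Fin k)) (l : List (Fin k → ℕ)) : Prop :=
  l.Pairwise fun a b => ∃ c ∈ S, b c < a c

/-- `w` belongs to the slab `ct = ⟨c, t⟩` relative to head `v`:
`c` is the least coordinate in `S` where `w` drops below `v`, and `w c = t`. -/
def slab (S : Finset (Fin k)) (v : Fin k → ℕ) (ct : Σ _ : Fin k, ℕ) (w : Fin k → ℕ) : Prop :=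
  ct.1 ∈ S ∧ w ct.1 = ct.2 ∧ w ct.1 < v ct.1 ∧ ∀ c' ∈ S, w c' < v c' → ct.1 ≤ c'

instance (S : Finset (Fin k)) (v : Fin k → ℕ) (ct : Σ _ : Fin k, ℕ) (w : Fin k → ℕ) :
    Decidable (slab S v ct w) := by
  unfold slab; infer_instance

/-- The ordinal measure on lists of rank-vectors. -/
noncomputable def M (S : Finset (Fin k)) (l : List (Fin k → ℕ)) : NatOrdinal.{u} :=
  match l with
  | [] => Ordinal.toNatOrdinal (omega0.{u} ^ (S.card : Ordinal))
  | v :: l =>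
    ∑ ct ∈ S.sigma fun c => Finset.range (v c),
      M (S.erase ct.1) (l.filter fun w => decide (slab S v ct w))
  termination_by l.length
  decreasing_by simpa using Nat.lt_succ_of_le ((List.length_filter_le _ _).trans (le_of_eq (List.length_attach (l := l))))

theorem M_nil (S : Finset (Fin k)) :
    M.{u} S [] = Ordinal.toNatOrdinal (omega0.{u} ^ (S.card : Ordinal)) := by
  rw [M]

theorem M_cons (S : Finset (Fin k)) (v : Fin k → ℕ) (l : List (Fin k → ℕ)) :
    M.{u} S (v :: l) = ∑ ct ∈ S.sigma fun c => Finset.range (v c),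
      M.{u} (S.erase ct.1) (l.filter fun w => decide (slab S v ct w)) := by
  rw [M]

/-- elements of a slab-filtered Bad list form a Bad list w.r.t. the smaller coordinate set -/
theorem bad_filter {S : Finset (Fin k)} {v : Fin k → ℕ} {ct : Σ _ : Fin k, ℕ}
    {l : List (Fin k → ℕ)} (hbad : Bad S l) :
    Bad (S.erase ct.1) (l.filter fun w => decide (slab S v ct w)) := by
  have h1 : (l.filter fun w => decide (slab S v ct w)).Pairwise fun a b => ∃ c ∈ S, b c < a c :=
    hbad.sublist List.filter_sublist
  refine List.Pairwise.imp_of_mem ?_ h1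
  intro a b hma hmb ⟨c, hcS, hlt⟩
  have hsa : slab S v ct a := by simpa using (List.mem_filter.1 hma).2
  have hsb : slab S v ct b := by simpa using (List.mem_filter.1 hmb).2
  refine ⟨c, Finset.mem_erase.2 ⟨?_, hcS⟩, hlt⟩
  rintro rfl
  rw [hsa.2.1, hsb.2.1] at hlt
  exact lt_irrefl _ hlt

/-- Lemma A: the measure of a nonempty Bad list is strictly below `ω ^ |S|`. -/
theorem M_cons_lt : ∀ (n : ℕ) (S : Finset (Fin k)) (v : Fin k → ℕ) (l : List (Fin k → ℕ)),
    l.length ≤ n → Bad S (v :: l) →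
    M.{u} S (v :: l) < Ordinal.toNatOrdinal (omega0.{u} ^ (S.card : Ordinal)) := by
  intro n
  induction n using Nat.strong_induction_on with
  | _ n IH =>
    intro S v l hlen hbad
    rw [M_cons]
    rcases (S.sigma fun c => Finset.range (v c)).eq_empty_or_nonempty with hJ | hJ
    · rw [hJ, Finset.sum_empty]
      apply lt_toNat
      simpa using opow_pos ((S.card : Ordinal)) omega0_pos
    · obtain ⟨ct₀, hct₀⟩ := hJ
      have hS0 : ct₀.1 ∈ S := (Finset.mem_sigma.1 hct₀).1
      have hcard : 1 ≤ S.card := Finset.card_pos.2 ⟨ct₀.1, hS0⟩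
      have hSc : S.card = (S.card - 1) + 1 := by omega
      rw [hSc]
      apply sum_lt_opow_succ _ _ (S.card - 1)
      intro ct hct
      have hmem : ct.1 ∈ S := (Finset.mem_sigma.1 hct).1
      have hce : (S.erase ct.1).card = S.card - 1 := by
        rw [Finset.card_erase_of_mem hmem]
      have hbadf : Bad (S.erase ct.1) (l.filter fun w => decide (slab S v ct w)) :=
        bad_filter (List.pairwise_cons.1 hbad).2
      cases hfl : l.filter fun w => decide (slab S v ct w) with
      | nil =>
        rw [M_nil, hce]
      | cons v' l'' =>
        have hlt : l''.length < n := by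
          have h1 : (l.filter fun w => decide (slab S v ct w)).length ≤ l.length :=
            List.length_filter_le _ l
          rw [hfl] at h1
          simp only [List.length_cons] at h1
          omega
        rw [hfl] at hbadf
        have := IH l''.length hlt (S.erase ct.1) v' l'' le_rfl hbadf
        rw [hce] at this
        exact this.le

/-- Lemma B: appending an element to a Bad list strictly decreases the measure. -/
theorem M_append_lt : ∀ (n : ℕ) (S : Finset (Fin k)) (l : List (Fin k → ℕ)) (w : Fin k → ℕ),
    l.length ≤ n → Bad S (l ++ [w]) → M.{u} S (l ++ [w]) < M.{u} S l := by
  intro n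
  induction n using Nat.strong_induction_on with
  | _ n IH =>
    intro S l w hlen hbad
    match l with
    | [] =>
      rw [List.nil_append, M_nil]
      exact M_cons_lt 0 S w [] le_rfl hbad
    | v :: l' =>
      rw [List.cons_append, M_cons, M_cons]
      -- the new element w is related to the head v
      have hw_rel : ∃ c ∈ S, w c < v c := by
        have h := (List.pairwise_cons.1 hbad).1 w (by simp)
        exact h
      classical
      set T := S.filter (fun c => w c < v c) with hT
      have hTne : T.Nonempty := by
        obtain ⟨c, hc1, hc2⟩ := hw_rel
        exact ⟨c, by simp [hT, hc1, hc2]⟩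
      set c₀ := T.min' hTne with hc₀
      have hc₀T : c₀ ∈ T := T.min'_mem hTne
      have hc₀S : c₀ ∈ S := (Finset.mem_filter.1 hc₀T).1
      have hc₀lt : w c₀ < v c₀ := (Finset.mem_filter.1 hc₀T).2
      have hslab₀ : slab S v ⟨c₀, w c₀⟩ w := by
        refine ⟨hc₀S, rfl, hc₀lt, ?_⟩
        intro c' hc' hlt'
        exact T.min'_le c' (Finset.mem_filter.2 ⟨hc', hlt'⟩)
      have huniq : ∀ ct : Σ _ : Fin k, ℕ, slab S v ct w → ct = ⟨c₀, w c₀⟩ := by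
        rintro ⟨c, t⟩ ⟨h1, h2, h3, h4⟩
        have hle1 : c ≤ c₀ := h4 c₀ hc₀S hc₀lt
        have hle2 : c₀ ≤ c := T.min'_le c (Finset.mem_filter.2 ⟨h1, h3⟩)
        have : c = c₀ := le_antisymm hle1 hle2
        subst this
        have h2' : w c₀ = t := h2
        subst h2'
        rfl
      have hct₀mem : (⟨c₀, w c₀⟩ : Σ _ : Fin k, ℕ) ∈ S.sigma fun c => Finset.range (v c) := by
        rw [Finset.mem_sigma]
        exact ⟨hc₀S, Finset.mem_range.2 hc₀lt⟩
      have hbadtail : Bad S (l' ++ [w]) := (List.pairwise_cons.1 hbad).2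
      apply Finset.sum_lt_sum
      · intro ct hct
        by_cases hs : slab S v ct w
        · have hfeq : (l' ++ [w]).filter (fun x => decide (slab S v ct x)) =
              (l'.filter fun x => decide (slab S v ct x)) ++ [w] := by
            rw [List.filter_append]
            simp [hs]
          rw [hfeq]
          have hbadf : Bad (S.erase ct.1)
              ((l'.filter fun x => decide (slab S v ct x)) ++ [w]) := by
            have := bad_filter (S := S) (v := v) (ct := ct) hbadtail
            rwa [hfeq] at this
          refine (IH (l'.filter fun x => decide (slab S v ct x)).length ?_ _ _ _ le_rfl hbadf).le
          calc (l'.filter fun x => decide (slab S v ct x)).length ≤ l'.length :=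
                List.length_filter_le _ _
            _ < n := by simp at hlen; omega
        · have hfeq : (l' ++ [w]).filter (fun x => decide (slab S v ct x)) =
              l'.filter fun x => decide (slab S v ct x) := by
            rw [List.filter_append]
            simp [hs]
          rw [hfeq]
      · refine ⟨⟨c₀, w c₀⟩, hct₀mem, ?_⟩
        have hfeq : (l' ++ [w]).filter (fun x => decide (slab S v ⟨c₀, w c₀⟩ x)) =
            (l'.filter fun x => decide (slab S v ⟨c₀, w c₀⟩ x)) ++ [w] := by
          rw [List.filter_append]
          simp [hslab₀]
        rw [hfeq]
        have hbadf : Bad (S.erase c₀)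
            ((l'.filter fun x => decide (slab S v ⟨c₀, w c₀⟩ x)) ++ [w]) := by
          have := bad_filter (S := S) (v := v) (ct := (⟨c₀, w c₀⟩ : Σ _ : Fin k, ℕ)) hbadtail
          rwa [hfeq] at this
        refine IH (l'.filter fun x => decide (slab S v ⟨c₀, w c₀⟩ x)).length ?_ _ _ _ le_rfl hbadf
        calc (l'.filter fun x => decide (slab S v ⟨c₀, w c₀⟩ x)).length ≤ l'.length :=
              List.length_filter_le _ _
          _ < n := by simp at hlen; omega

/-- rank is bounded by any strictly increasing ordinal assignment -/
theorem rank_le_of_strict {α : Type u} {r : α → α → Prop} (f : α → Ordinal.{u})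
    (hf : ∀ a b, r a b → f a < f b) (hwf : WellFounded r) (a : α) :
    (hwf.apply a).rank ≤ f a := by
  induction a using hwf.induction with
  | _ a IHa =>
    rw [Acc.rank_eq]
    apply Ordinal.iSup_le
    rintro ⟨b, hb⟩
    rw [Order.succ_le_iff]
    have h1 : (((hwf.apply a).inv hb).rank : Ordinal.{u}) = (hwf.apply b).rank := by
      congr 1
    rw [h1]
    exact lt_of_le_of_lt (IHa b hb) (hf b a hb)

end Stmt3Aux

/-- if `R₁, …, R_k` are binary relations on `I`, each of height at most `ω`,
then the converse of the one-step extension relation on `H(R₁ ∪ ⋯ ∪ R_k)` is well-founded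
and the rank of the empty sequence is at most `ω^k`. -/
theorem stmt_3 {I : Type u} (k : ℕ) (R : Fin k → I → I → Prop)
    (hht : ∀ i, ∃ hwf : WellFounded (R i), ∀ x : I, WFRank hwf x < Ordinal.omega0.{u}) :
    ∃ hwf : WellFounded (HExt fun x y => ∃ i, R i x y),
      WFRank hwf ⟨[], List.Pairwise.nil⟩ ≤ Ordinal.omega0.{u} ^ (k : Ordinal) := by
  classical
  set r : I → I → Prop := fun x y => ∃ i, R i x y with hr
  -- the rank vector of an element
  have hφ : ∀ x : I, ∃ φx : Fin k → ℕ, ∀ i, WFRank (hht i).choose x = φx i := by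
    intro x
    refine ⟨fun i => ((Ordinal.lt_omega0.1 ((hht i).choose_spec x)).choose), fun i => ?_⟩
    exact (Ordinal.lt_omega0.1 ((hht i).choose_spec x)).choose_spec
  choose φ hφspec using hφ
  have hmono : ∀ (i : Fin k) (x y : I), R i x y → φ x i < φ y i := by
    intro i x y h
    have h2 : WFRank (hht i).choose x < WFRank (hht i).choose y := by
      have h3 := Acc.rank_lt_of_rel ((hht i).choose.apply y) h
      have h4 : ((((hht i).choose.apply y)).inv h).rank = WFRank (hht i).choose x := by
        unfold WFRank; congr 1
      rwa [h4] at h3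
    rw [hφspec x i, hφspec y i] at h2
    exact_mod_cast h2
  -- the measure
  set F : {l : List I // l ∈ HSet r} → NatOrdinal.{u} :=
    fun s => Stmt3Aux.M.{u} (Finset.univ : Finset (Fin k)) (s.1.map φ) with hF
  have hdec : ∀ s' s, HExt r s' s → F s' < F s := by
    rintro s' s ⟨y, hy⟩
    have hbad : Stmt3Aux.Bad (Finset.univ : Finset (Fin k)) ((s.1.map φ) ++ [φ y]) := by
      have h1 : (s.1 ++ [y]).Pairwise fun a b => r b a := by rw [← hy]; exact s'.2
      have h2 : ((s.1 ++ [y]).map φ).Pairwise fun a b => ∃ c ∈ Finset.univ, b c < a c := by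
        rw [List.pairwise_map]
        refine h1.imp ?_
        rintro a b ⟨i, hi⟩
        exact ⟨i, Finset.mem_univ i, hmono i b a hi⟩
      rwa [List.map_append] at h2
    have := Stmt3Aux.M_append_lt.{u} (s.1.map φ).length Finset.univ (s.1.map φ) (φ y) le_rfl hbad
    calc F s' = Stmt3Aux.M.{u} Finset.univ ((s.1 ++ [y]).map φ) := by rw [hF]; simp only [hy]
      _ = Stmt3Aux.M.{u} Finset.univ ((s.1.map φ) ++ [φ y]) := by rw [List.map_append]; rfl
      _ < Stmt3Aux.M.{u} Finset.univ (s.1.map φ) := this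
      _ = F s := rfl
  have hwf : WellFounded (HExt r) := by
    apply Subrelation.wf (r := InvImage (· < ·) F)
    · intro a b h
      exact hdec a b h
    · exact InvImage.wf F wellFounded_lt
  refine ⟨hwf, ?_⟩
  have hle := Stmt3Aux.rank_le_of_strict (fun s => NatOrdinal.toOrdinal (F s))
    (fun a b h => NatOrdinal.toOrdinal.lt_iff_lt.2 (hdec a b h)) hwf ⟨[], List.Pairwise.nil⟩
  refine hle.trans ?_
  show NatOrdinal.toOrdinal (Stmt3Aux.M.{u} Finset.univ (([] : List I).map φ)) ≤ _
  rw [List.map_nil, Stmt3Aux.M_nil]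
  simp only [Finset.card_univ, Fintype.card_fin]
  exact le_rfl
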